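/- arXiv:1902.05157 — 2 statements merged into one kernel-verified Lean document; each statement's English description precedes it below -/
import Mathlib

section
/- Let A be SPD in 2×2 block form as above and P = [W ; I]. Then for each column index j, minimizing ‖(P − P_ideal) e_j‖_A over the j-th column of W is equivalent to minimizing ‖P e_j‖_A: specifically, ‖(P − P_ideal)e_j‖_A² = ‖P e_j‖_A² − e_jᵀ S e_j, where S = A_cc − A_cf A_ff⁻¹ A_fc is the Schur complement, and the right-hand term is independent of W. -/
open Matrix

/-- Interpolation operator `P = [W ; I]` in CF block form. -/
noncomputable def Pmat {nf nc : ℕ} (W : Matrix (Fin nf) (Fin nc) ℝ) :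
    Matrix (Fin nf ⊕ Fin nc) (Fin nc) ℝ :=
  Matrix.of fun i j => Sum.elim (fun i₁ => W i₁ j) (fun i₂ => if i₂ = j then (1 : ℝ) else 0) i

/-- Restriction operator `R = [0 I]` in CF block form. -/
noncomputable def Rmat {nf nc : ℕ} : Matrix (Fin nc) (Fin nf ⊕ Fin nc) ℝ :=
  Matrix.of fun j i => Sum.elim (fun _ => (0 : ℝ)) (fun i₂ => if i₂ = j then (1 : ℝ) else 0) i

/-- The `A`-norm of a vector, `‖v‖_A = √(vᵀ A v)`. -/
noncomputable def anorm {m : Type*} [Fintype m] (A : Matrix m m ℝ) (v : m → ℝ) : ℝ :=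
  Real.sqrt (v ⬝ᵥ A.mulVec v)

/-- The operator norm of a matrix `E` induced by the `A`-norm. -/
noncomputable def opNormA {m : Type*} [Fintype m] (A E : Matrix m m ℝ) : ℝ :=
  ⨆ v : {v : m → ℝ // v ≠ 0}, anorm A (E.mulVec v) / anorm A v

lemma Pmat_mulVec_single {nf nc : ℕ} (W : Matrix (Fin nf) (Fin nc) ℝ) (j : Fin nc) :
    (Pmat W).mulVec (Pi.single j 1) = Sum.elim (fun i => W i j) (Pi.single j 1) := by
  funext i
  cases i with
  | inl i₁ =>
    simp [Pmat, mulVec, dotProduct, Pi.single_apply, mul_ite]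
  | inr i₂ =>
    simp [Pmat, mulVec, dotProduct, Pi.single_apply, ite_and,
      Finset.sum_ite_eq, Finset.sum_ite_eq']

theorem column_energy_min_equiv_ideal {nf nc : ℕ}
    (Aff : Matrix (Fin nf) (Fin nf) ℝ) (Afc : Matrix (Fin nf) (Fin nc) ℝ)
    (Acc : Matrix (Fin nc) (Fin nc) ℝ)
    (hA : (Matrix.fromBlocks Aff Afc Afcᵀ Acc).PosDef)
    (W : Matrix (Fin nf) (Fin nc) ℝ) (j : Fin nc) :
    ((Pmat W - Pmat (-(Aff⁻¹ * Afc))).mulVec (Pi.single j 1)) ⬝ᵥ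
        (Matrix.fromBlocks Aff Afc Afcᵀ Acc).mulVec
          ((Pmat W - Pmat (-(Aff⁻¹ * Afc))).mulVec (Pi.single j 1))
      = ((Pmat W).mulVec (Pi.single j 1)) ⬝ᵥ
          (Matrix.fromBlocks Aff Afc Afcᵀ Acc).mulVec ((Pmat W).mulVec (Pi.single j 1))
        - (Pi.single j 1 : Fin nc → ℝ) ⬝ᵥ (Acc - Afcᵀ * Aff⁻¹ * Afc).mulVec (Pi.single j 1) := by
  classical
  set e : Fin nc → ℝ := Pi.single j 1 with he
  set w : Fin nf → ℝ := fun i => W i j with hw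
  -- Aff is positive definite
  have hsym : Affᵀ = Aff := by
    ext i k
    have := congrFun (congrFun hA.1 (Sum.inl i)) (Sum.inl k)
    simpa [conjTranspose_apply, fromBlocks] using this
  have hAffPD : Aff.PosDef := by
    refine Matrix.PosDef.of_dotProduct_mulVec_pos ?_ (fun x hx => ?_)
    · simpa [IsHermitian, conjTranspose, Matrix.map, transpose] using hsym
    · have hx0 : (Sum.elim x 0 : Fin nf ⊕ Fin nc → ℝ) ≠ 0 := by
        intro h
        apply hx
        funext i
        exact congrFun h (Sum.inl i)
      have := hA.dotProduct_mulVec_pos hx0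
      simpa [fromBlocks_mulVec, sumElim_dotProduct_sumElim, star] using this
  have hdet : IsUnit Aff.det := (Matrix.isUnit_iff_isUnit_det Aff).mp hAffPD.isUnit
  have hinv : Aff * Aff⁻¹ = 1 := Matrix.mul_nonsing_inv Aff hdet
  set v : Fin nf → ℝ := Aff⁻¹.mulVec (Afc.mulVec e) with hv
  -- key facts
  have h1 : Aff.mulVec v = Afc.mulVec e := by
    rw [hv, mulVec_mulVec, hinv, one_mulVec]
  have hvcol : (fun i => (-(Aff⁻¹ * Afc)) i j) = -v := by
    funext i
    simp [hv, mulVec_mulVec, mulVec, dotProduct, he, Pi.single_apply, mul_ite, Matrix.mul_apply]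
  -- compute the P-vectors
  have hPW : (Pmat W).mulVec e = Sum.elim w e := Pmat_mulVec_single W j
  have hPI : (Pmat (-(Aff⁻¹ * Afc))).mulVec e = Sum.elim (-v) e := by
    rw [he, Pmat_mulVec_single, hvcol]
  have hdiffvec : (Pmat W - Pmat (-(Aff⁻¹ * Afc))).mulVec e = Sum.elim (w + v) 0 := by
    rw [sub_mulVec, hPW, hPI]
    funext i
    cases i <;> simp
  -- symmetry consequences
  have h3 : v ⬝ᵥ Aff.mulVec w = w ⬝ᵥ Afc.mulVec e := by
    rw [Matrix.dotProduct_mulVec, ← mulVec_transpose, hsym, h1, dotProduct_comm]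
  have h2 : w ⬝ᵥ Aff.mulVec v = w ⬝ᵥ Afc.mulVec e := by rw [h1]
  have h4 : e ⬝ᵥ Afcᵀ.mulVec w = w ⬝ᵥ Afc.mulVec e := by
    rw [Matrix.dotProduct_mulVec, vecMul_transpose, dotProduct_comm]
  have h5 : v ⬝ᵥ Aff.mulVec v = v ⬝ᵥ Afc.mulVec e := by rw [h1]
  have h6 : e ⬝ᵥ (Afcᵀ * Aff⁻¹ * Afc).mulVec e = v ⬝ᵥ Afc.mulVec e := by
    rw [show Afcᵀ * Aff⁻¹ * Afc = Afcᵀ * (Aff⁻¹ * Afc) by rw [Matrix.mul_assoc],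
      ← mulVec_mulVec, ← mulVec_mulVec, ← hv, Matrix.dotProduct_mulVec, vecMul_transpose,
      dotProduct_comm]
  rw [hdiffvec, hPW]
  simp only [fromBlocks_mulVec, sumElim_dotProduct_sumElim, mulVec_zero, add_zero,
    dotProduct_zero, zero_dotProduct, mulVec_add, add_mulVec, dotProduct_add, add_dotProduct,
    sub_mulVec, dotProduct_sub, Sum.elim_comp_inl, Sum.elim_comp_inr]
  rw [h2, h3, h4, h5, h6]
  ring
end

section
/- Let A be SPD, P = [W ; I], R = [0 I]. Then ‖PR‖_A² ≤ ‖A⁻¹‖₂ · tr(PᵀAP). -/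
open Matrix

section Helpers

variable {m n : Type*} [Fintype m] [Fintype n] [DecidableEq m]

set_option linter.unusedSectionVars false

/-- Frobenius bound: `‖M v‖² ≤ ‖M‖_F² ‖v‖²`. -/
lemma frob_bound (M : Matrix m n ℝ) (v : n → ℝ) :
    (M *ᵥ v) ⬝ᵥ (M *ᵥ v) ≤ (∑ j, ∑ i, (M j i) ^ 2) * (v ⬝ᵥ v) := by
  have h : ∀ j, (M *ᵥ v) j ^ 2 ≤ (∑ i, (M j i) ^ 2) * (v ⬝ᵥ v) := by
    intro j
    simpa [Matrix.mulVec, dotProduct, pow_two] using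
      Finset.sum_mul_sq_le_sq_mul_sq Finset.univ (fun i => M j i) v
  calc (M *ᵥ v) ⬝ᵥ (M *ᵥ v) = ∑ j, (M *ᵥ v) j ^ 2 := by
        simp [dotProduct, pow_two]
    _ ≤ ∑ j, (∑ i, (M j i) ^ 2) * (v ⬝ᵥ v) := Finset.sum_le_sum fun j _ => h j
    _ = (∑ j, ∑ i, (M j i) ^ 2) * (v ⬝ᵥ v) := by rw [Finset.sum_mul]

open scoped MatrixOrder in
/-- Cauchy-Schwarz for a PSD quadratic form. -/
lemma psd_cs {M : Matrix m m ℝ} (hM : M.PosSemidef) (x y : m → ℝ) :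
    (x ⬝ᵥ M *ᵥ y) ^ 2 ≤ (x ⬝ᵥ M *ᵥ x) * (y ⬝ᵥ M *ᵥ y) := by
  set S := CFC.sqrt M with hS
  have hSsym : Sᵀ = S := by
    have := (CFC.sqrt_nonneg M).posSemidef.1
    simpa [Matrix.IsHermitian] using this
  have key : ∀ a b : m → ℝ, a ⬝ᵥ M *ᵥ b = (S *ᵥ a) ⬝ᵥ (S *ᵥ b) := by
    intro a b
    rw [← CFC.sqrt_mul_sqrt_self M hM.nonneg, ← Matrix.mulVec_mulVec, Matrix.dotProduct_mulVec,
      ← Matrix.mulVec_transpose, hSsym]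
  rw [key x y, key x x, key y y]
  simpa [dotProduct, pow_two] using
    Finset.sum_mul_sq_le_sq_mul_sq Finset.univ (S *ᵥ x) (S *ᵥ y)

open scoped MatrixOrder in
/-- Quadratic form bounded by the trace times the Euclidean norm. -/
lemma psd_trace_bound {M : Matrix m m ℝ} (hM : M.PosSemidef) (x : m → ℝ) :
    x ⬝ᵥ M *ᵥ x ≤ M.trace * (x ⬝ᵥ x) := by
  set S := CFC.sqrt M with hS
  have hSsym : Sᵀ = S := by
    have := (CFC.sqrt_nonneg M).posSemidef.1
    simpa [Matrix.IsHermitian] using this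
  have key : x ⬝ᵥ M *ᵥ x = (S *ᵥ x) ⬝ᵥ (S *ᵥ x) := by
    rw [← CFC.sqrt_mul_sqrt_self M hM.nonneg, ← Matrix.mulVec_mulVec, Matrix.dotProduct_mulVec,
      ← Matrix.mulVec_transpose, hSsym]
  have htr : M.trace = ∑ j, ∑ i, (S j i) ^ 2 := by
    rw [← CFC.sqrt_mul_sqrt_self M hM.nonneg]
    simp only [Matrix.trace, Matrix.diag, Matrix.mul_apply]
    refine Finset.sum_congr rfl fun j _ => Finset.sum_congr rfl fun i _ => ?_
    have h1 : CFC.sqrt M i j = CFC.sqrt M j i :=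
      (Matrix.transpose_apply (CFC.sqrt M) j i).symm.trans (congrFun (congrFun hSsym j) i)
    rw [pow_two]
    exact congrArg (fun t => CFC.sqrt M j i * t) h1
  rw [key, htr]
  exact frob_bound S x

/-- PSD matrices have nonneg trace. -/
lemma psd_trace_nonneg {M : Matrix m m ℝ} (hM : M.PosSemidef) : 0 ≤ M.trace := by
  have h : ∀ i, 0 ≤ M i i := by
    intro i
    have := hM.dotProduct_mulVec_nonneg (Pi.single i 1)
    simpa [dotProduct, Matrix.mulVec, Pi.single_apply, Finset.sum_ite_eq',
      Finset.sum_ite_eq] using this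
  exact Finset.sum_nonneg fun i _ => h i

lemma opNormA_nonneg (A E : Matrix m m ℝ) : 0 ≤ opNormA A E :=
  Real.iSup_nonneg fun _ => div_nonneg (Real.sqrt_nonneg _) (Real.sqrt_nonneg _)

lemma dot_self_nonneg (v : m → ℝ) : 0 ≤ v ⬝ᵥ v := by
  simpa [dotProduct, pow_two] using
    Finset.sum_nonneg (fun i (_ : i ∈ Finset.univ) => mul_self_nonneg (v i))

lemma dot_self_pos {v : m → ℝ} (hv : v ≠ 0) : 0 < v ⬝ᵥ v := by
  rcases (dot_self_nonneg v).lt_or_eq with h | h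
  · exact h
  · exact absurd (dotProduct_self_eq_zero.1 h.symm) hv

lemma dot_cs (v w : m → ℝ) : v ⬝ᵥ w ≤ Real.sqrt (v ⬝ᵥ v) * Real.sqrt (w ⬝ᵥ w) := by
  have h := Finset.sum_mul_sq_le_sq_mul_sq Finset.univ v w
  have h2 : (v ⬝ᵥ w) ^ 2 ≤ (v ⬝ᵥ v) * (w ⬝ᵥ w) := by
    simpa [dotProduct, pow_two, mul_comm] using h
  calc v ⬝ᵥ w ≤ |v ⬝ᵥ w| := le_abs_self _
    _ = Real.sqrt ((v ⬝ᵥ w) ^ 2) := (Real.sqrt_sq_eq_abs _).symm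
    _ ≤ Real.sqrt ((v ⬝ᵥ v) * (w ⬝ᵥ w)) := Real.sqrt_le_sqrt h2
    _ = _ := Real.sqrt_mul (dot_self_nonneg v) _

lemma anorm_one (v : m → ℝ) : anorm (1 : Matrix m m ℝ) v = Real.sqrt (v ⬝ᵥ v) := by
  simp [anorm, Matrix.one_mulVec]

/-- The Euclidean norm squared is bounded by `‖A⁻¹‖ ⟨w, Aw⟩` for `A` positive definite. -/
lemma euclid_le {A : Matrix m m ℝ} (hA : A.PosDef) (w : m → ℝ) :
    w ⬝ᵥ w ≤ opNormA (1 : Matrix m m ℝ) A⁻¹ * (w ⬝ᵥ A *ᵥ w) := by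
  classical
  set c := opNormA (1 : Matrix m m ℝ) A⁻¹ with hc
  have hc0 : 0 ≤ c := opNormA_nonneg _ _
  -- boundedness of the defining family for c
  have hbdd : BddAbove (Set.range fun v : {v : m → ℝ // v ≠ 0} =>
      anorm 1 (A⁻¹ *ᵥ v.1) / anorm 1 v.1) := by
    refine ⟨Real.sqrt (∑ j, ∑ i, (A⁻¹ j i) ^ 2), ?_⟩
    rintro x ⟨⟨v, hv⟩, rfl⟩
    show anorm 1 (A⁻¹ *ᵥ v) / anorm 1 v ≤ Real.sqrt (∑ j, ∑ i, (A⁻¹ j i) ^ 2)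
    have hvpos : 0 < Real.sqrt (v ⬝ᵥ v) := Real.sqrt_pos.2 (dot_self_pos hv)
    rw [anorm_one, anorm_one, div_le_iff₀ hvpos]
    calc Real.sqrt ((A⁻¹ *ᵥ v) ⬝ᵥ (A⁻¹ *ᵥ v))
        ≤ Real.sqrt ((∑ j, ∑ i, (A⁻¹ j i) ^ 2) * (v ⬝ᵥ v)) :=
          Real.sqrt_le_sqrt (frob_bound A⁻¹ v)
      _ = _ := Real.sqrt_mul (Finset.sum_nonneg fun j _ =>
          Finset.sum_nonneg fun i _ => sq_nonneg _) _
  have hratio : ∀ v : m → ℝ, v ≠ 0 →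
      Real.sqrt ((A⁻¹ *ᵥ v) ⬝ᵥ (A⁻¹ *ᵥ v)) ≤ c * Real.sqrt (v ⬝ᵥ v) := by
    intro v hv
    have h := le_ciSup hbdd (⟨v, hv⟩ : {v : m → ℝ // v ≠ 0})
    rw [anorm_one, anorm_one, div_le_iff₀ (Real.sqrt_pos.2 (dot_self_pos hv))] at h
    exact h
  have claim1 : ∀ v : m → ℝ, v ⬝ᵥ A⁻¹ *ᵥ v ≤ c * (v ⬝ᵥ v) := by
    intro v
    by_cases hv : v = 0
    · simp [hv]
    · calc v ⬝ᵥ A⁻¹ *ᵥ v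
          ≤ Real.sqrt (v ⬝ᵥ v) * Real.sqrt ((A⁻¹ *ᵥ v) ⬝ᵥ (A⁻¹ *ᵥ v)) := dot_cs _ _
        _ ≤ Real.sqrt (v ⬝ᵥ v) * (c * Real.sqrt (v ⬝ᵥ v)) :=
            mul_le_mul_of_nonneg_left (hratio v hv) (Real.sqrt_nonneg _)
        _ = c * (Real.sqrt (v ⬝ᵥ v) * Real.sqrt (v ⬝ᵥ v)) := by ring
        _ = c * (v ⬝ᵥ v) := by rw [Real.mul_self_sqrt (dot_self_nonneg v)]
  -- now the main claim
  have hAinv : A * A⁻¹ = 1 := Matrix.mul_nonsing_inv _ (isUnit_iff_isUnit_det _ |>.1 hA.isUnit)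
  have hw : A *ᵥ (A⁻¹ *ᵥ w) = w := by
    rw [Matrix.mulVec_mulVec, hAinv, Matrix.one_mulVec]
  have hAw0 : 0 ≤ w ⬝ᵥ A *ᵥ w := by
    have := hA.posSemidef.dotProduct_mulVec_nonneg w
    simpa using this
  have h1 : w ⬝ᵥ w = w ⬝ᵥ A *ᵥ (A⁻¹ *ᵥ w) := by rw [hw]
  have h2 : (A⁻¹ *ᵥ w) ⬝ᵥ A *ᵥ (A⁻¹ *ᵥ w) = w ⬝ᵥ A⁻¹ *ᵥ w := by
    rw [hw, dotProduct_comm]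
  have hcs := psd_cs hA.posSemidef w (A⁻¹ *ᵥ w)
  rw [← h1, h2] at hcs
  have hsq : (w ⬝ᵥ w) ^ 2 ≤ (w ⬝ᵥ A *ᵥ w) * (c * (w ⬝ᵥ w)) :=
    hcs.trans (mul_le_mul_of_nonneg_left (claim1 w) hAw0)
  by_cases hww : w ⬝ᵥ w = 0
  · rw [hww]
    exact mul_nonneg hc0 hAw0
  · have hpos : 0 < w ⬝ᵥ w := (dot_self_nonneg w).lt_of_ne (Ne.symm hww)
    have : (w ⬝ᵥ w) * (w ⬝ᵥ w) ≤ (c * (w ⬝ᵥ A *ᵥ w)) * (w ⬝ᵥ w) := by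
      calc (w ⬝ᵥ w) * (w ⬝ᵥ w) = (w ⬝ᵥ w) ^ 2 := (pow_two _).symm
        _ ≤ (w ⬝ᵥ A *ᵥ w) * (c * (w ⬝ᵥ w)) := hsq
        _ = (c * (w ⬝ᵥ A *ᵥ w)) * (w ⬝ᵥ w) := by ring
    exact le_of_mul_le_mul_right this hpos

end Helpers

theorem PR_Anorm_le_Ainv_trace {nf nc : ℕ}
    (Aff : Matrix (Fin nf) (Fin nf) ℝ) (Afc : Matrix (Fin nf) (Fin nc) ℝ)
    (Acf : Matrix (Fin nc) (Fin nf) ℝ) (Acc : Matrix (Fin nc) (Fin nc) ℝ)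
    (A : Matrix (Fin nf ⊕ Fin nc) (Fin nf ⊕ Fin nc) ℝ)
    (hAdef : A = Matrix.fromBlocks Aff Afc Acf Acc) (hA : A.PosDef)
    (W : Matrix (Fin nf) (Fin nc) ℝ) :
    (opNormA A (Pmat W * Rmat)) ^ 2
      ≤ opNormA (1 : Matrix (Fin nf ⊕ Fin nc) (Fin nf ⊕ Fin nc) ℝ) A⁻¹ *
          Matrix.trace ((Pmat W)ᵀ * A * Pmat W) := by
  classical
  set c := opNormA (1 : Matrix (Fin nf ⊕ Fin nc) (Fin nf ⊕ Fin nc) ℝ) A⁻¹ with hc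
  set M := (Pmat W)ᵀ * A * Pmat W with hMdef
  have hMpsd : M.PosSemidef := by
    have h := hA.posSemidef.conjTranspose_mul_mul_same (Pmat W)
    rwa [Matrix.conjTranspose_eq_transpose_of_trivial] at h
  have htr : 0 ≤ M.trace := psd_trace_nonneg hMpsd
  have hc0 : 0 ≤ c := opNormA_nonneg _ _
  have hquad : ∀ v : (Fin nf ⊕ Fin nc) → ℝ,
      ((Pmat W * Rmat) *ᵥ v) ⬝ᵥ (A *ᵥ ((Pmat W * Rmat) *ᵥ v))
        = (Rmat *ᵥ v) ⬝ᵥ (M *ᵥ (Rmat *ᵥ v)) := by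
    intro v
    rw [show (Pmat W * Rmat) *ᵥ v = Pmat W *ᵥ (Rmat *ᵥ v) from
      (Matrix.mulVec_mulVec v (Pmat W) Rmat).symm]
    rw [Matrix.mulVec_mulVec (M := A) (N := Pmat W)]
    conv_rhs => rw [hMdef, Matrix.mul_assoc, ← Matrix.mulVec_mulVec,
      Matrix.dotProduct_mulVec, Matrix.vecMul_transpose]
  have hu : ∀ v : (Fin nf ⊕ Fin nc) → ℝ, Rmat *ᵥ v = fun j => v (Sum.inr j) := by
    intro v; funext j
    simp [Rmat, Matrix.mulVec, dotProduct, Fintype.sum_sum_type]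
  have huu : ∀ v : (Fin nf ⊕ Fin nc) → ℝ, (Rmat *ᵥ v) ⬝ᵥ (Rmat *ᵥ v) ≤ v ⬝ᵥ v := by
    intro v
    rw [hu]
    simp only [dotProduct, Fintype.sum_sum_type]
    exact le_add_of_nonneg_left (Finset.sum_nonneg fun i _ => mul_self_nonneg _)
  have hkey : ∀ v : (Fin nf ⊕ Fin nc) → ℝ,
      anorm A ((Pmat W * Rmat) *ᵥ v) ≤ Real.sqrt (c * M.trace) * anorm A v := by
    intro v
    have h1 : ((Pmat W * Rmat) *ᵥ v) ⬝ᵥ (A *ᵥ ((Pmat W * Rmat) *ᵥ v))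
        ≤ c * M.trace * (v ⬝ᵥ A *ᵥ v) := by
      rw [hquad v]
      calc (Rmat *ᵥ v) ⬝ᵥ (M *ᵥ (Rmat *ᵥ v))
          ≤ M.trace * ((Rmat *ᵥ v) ⬝ᵥ (Rmat *ᵥ v)) := psd_trace_bound hMpsd _
        _ ≤ M.trace * (v ⬝ᵥ v) := mul_le_mul_of_nonneg_left (huu v) htr
        _ ≤ M.trace * (c * (v ⬝ᵥ A *ᵥ v)) :=
            mul_le_mul_of_nonneg_left (euclid_le hA v) htr
        _ = c * M.trace * (v ⬝ᵥ A *ᵥ v) := by ring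
    show Real.sqrt _ ≤ _
    calc Real.sqrt (((Pmat W * Rmat) *ᵥ v) ⬝ᵥ (A *ᵥ ((Pmat W * Rmat) *ᵥ v)))
        ≤ Real.sqrt (c * M.trace * (v ⬝ᵥ A *ᵥ v)) := Real.sqrt_le_sqrt h1
      _ = Real.sqrt (c * M.trace) * Real.sqrt (v ⬝ᵥ A *ᵥ v) :=
          Real.sqrt_mul (mul_nonneg hc0 htr) _
  have hop : opNormA A (Pmat W * Rmat) ≤ Real.sqrt (c * M.trace) := by
    refine Real.iSup_le ?_ (Real.sqrt_nonneg _)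
    rintro ⟨v, hv⟩
    have hApos : 0 < v ⬝ᵥ A *ᵥ v := by
      have := hA.dotProduct_mulVec_pos hv
      simpa using this
    have hpos : 0 < anorm A v := Real.sqrt_pos.2 hApos
    rw [div_le_iff₀ hpos]
    exact hkey v
  calc (opNormA A (Pmat W * Rmat)) ^ 2
      ≤ (Real.sqrt (c * M.trace)) ^ 2 := pow_le_pow_left₀ (opNormA_nonneg A _) hop 2
    _ = c * M.trace := Real.sq_sqrt (mul_nonneg hc0 htr)
end
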